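/- Let (X, δ) be a hyperconvex diversity with induced metric d(x,y) = δ({x,y}). If for every finite subset A = {x_1, …, x_n} of X one has (|A| − 1) · δ(A) ≤ Σ_{1 ≤ i < j ≤ n} d(x_i, x_j), then the induced metric space (X, d) is a hyperconvex metric space. -/

import Mathlib

/-- A diversity on `X`: a real-valued function on finite subsets of `X` which is
nonnegative, vanishes exactly on sets of cardinality at most one, and satisfies the
triangle inequality `δ(A ∪ C) ≤ δ(A ∪ B) + δ(B ∪ C)` for nonempty `B`. -/
structure Diversity (X : Type*) [DecidableEq X] where
  delta : Finset X → ℝ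
  nonneg : ∀ A, 0 ≤ delta A
  eq_zero_iff : ∀ A, delta A = 0 ↔ A.card ≤ 1
  triangle : ∀ A B C : Finset X, B.Nonempty →
    delta (A ∪ C) ≤ delta (A ∪ B) + delta (B ∪ C)

namespace Diversity

variable {X : Type*} [DecidableEq X]

/-- A diversity is hyperconvex if for every `r : ⟨X⟩ → ℝ` with `r ∅ = 0` such that
`δ(⋃_{A ∈ 𝒜} A) ≤ ∑_{A ∈ 𝒜} r A` for every finite collection `𝒜` of finite subsets
of `X`, there is `z ∈ X` with `δ({z} ∪ Y) ≤ r Y` for all finite `Y ⊆ X`. -/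
def Hyperconvex (D : Diversity X) : Prop :=
  ∀ r : Finset X → ℝ, r ∅ = 0 →
    (∀ 𝒜 : Finset (Finset X), D.delta (𝒜.sup id) ≤ ∑ A ∈ 𝒜, r A) →
    ∃ z : X, ∀ Y : Finset X, D.delta (insert z Y) ≤ r Y

/-- A diversity is bounded if its values are uniformly bounded above. -/
def Bounded (D : Diversity X) : Prop :=
  ∃ M : ℝ, 0 ≤ M ∧ ∀ A : Finset X, D.delta A ≤ M

end Diversity

namespace Diversity

variable {X : Type*} [DecidableEq X]

/-- The closed ball of center `x` and radius `r` of the metric space induced by a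
diversity (`d(x, y) = δ {x, y}`). -/
def ball (D : Diversity X) (x : X) (r : ℝ) : Set X :=
  {y : X | D.delta {x, y} ≤ r}

/-- Hyperconvexity of the metric space induced by a diversity: every family of closed
balls whose radii are nonnegative and satisfy `d(x_α, x_β) ≤ r_α + r_β` has nonempty
intersection. -/
def InducedHyperconvex (D : Diversity X) : Prop :=
  ∀ s : Set (X × ℝ), (∀ p ∈ s, 0 ≤ p.2) →
    (∀ p ∈ s, ∀ q ∈ s, D.delta {p.1, q.1} ≤ p.2 + q.2) →
    (⋂ p ∈ s, D.ball p.1 p.2).Nonempty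

end Diversity

section Aux

variable {X : Type*} [DecidableEq X]

lemma aux_delta_singleton (D : Diversity X) (x : X) : D.delta {x} = 0 :=
  (D.eq_zero_iff _).mpr (by simp)

lemma aux_delta_empty (D : Diversity X) : D.delta ∅ = 0 :=
  (D.eq_zero_iff _).mpr (by simp)

/-- Repeated triangle inequality around a point. -/
lemma aux_insert_sup (D : Diversity X) (x : X) (𝒜 : Finset (Finset X)) :
    D.delta (insert x (𝒜.sup id)) ≤ ∑ A ∈ 𝒜, D.delta (insert x A) := by
  classical
  induction 𝒜 using Finset.induction_on with
  | empty => simp [aux_delta_singleton]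
  | insert A 𝒜 hA ih =>
    rw [Finset.sup_insert, Finset.sum_insert hA]
    have key : insert x (id A ⊔ 𝒜.sup id) = (insert x A) ∪ (insert x (𝒜.sup id)) := by
      ext y
      simp only [id, Finset.sup_eq_union, Finset.mem_union, Finset.mem_insert]
      tauto
    rw [key]
    have h1 : insert x A ∪ {x} = insert x A := by
      ext y; simp only [Finset.mem_union, Finset.mem_insert, Finset.mem_singleton]; tauto
    have h2 : ({x} : Finset X) ∪ insert x (𝒜.sup id) = insert x (𝒜.sup id) := by
      ext y; simp only [Finset.mem_union, Finset.mem_insert, Finset.mem_singleton]; tauto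
    have := D.triangle (insert x A) {x} (insert x (𝒜.sup id)) ⟨x, Finset.mem_singleton_self x⟩
    rw [h1, h2] at this
    linarith

lemma aux_sum_sup (f : X → ℝ) (hf : ∀ x, 0 ≤ f x) (𝒜 : Finset (Finset X)) :
    ∑ u ∈ 𝒜.sup id, f u ≤ ∑ A ∈ 𝒜, ∑ u ∈ A, f u := by
  classical
  induction 𝒜 using Finset.induction_on with
  | empty => simp
  | insert A 𝒜 hA ih =>
    rw [Finset.sup_insert, Finset.sum_insert hA]
    have hui : ∑ u ∈ (id A ∪ 𝒜.sup id), f u + ∑ u ∈ (id A ∩ 𝒜.sup id), f u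
        = ∑ u ∈ id A, f u + ∑ u ∈ 𝒜.sup id, f u := Finset.sum_union_inter
    have hnn : 0 ≤ ∑ u ∈ (id A ∩ 𝒜.sup id), f u := Finset.sum_nonneg fun u _ => hf u
    have : (id A ⊔ 𝒜.sup id) = id A ∪ 𝒜.sup id := rfl
    rw [this]
    simp only [id] at *
    linarith

lemma aux_sum_insert_le (f : X → ℝ) (hf : ∀ x, 0 ≤ f x) (a : X) (t : Finset X) :
    ∑ u ∈ insert a t, f u ≤ f a + ∑ u ∈ t, f u := by
  classical
  by_cases h : a ∈ t
  · rw [Finset.insert_eq_self.mpr h]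
    linarith [hf a]
  · rw [Finset.sum_insert h]

end Aux

/-- Let `(X, δ)` be a hyperconvex diversity with induced metric
`d(x,y) = δ {x,y}`. If `(|A| - 1) · δ(A) ≤ ∑_{1 ≤ i < j ≤ n} d(x_i, x_j)` for every
finite subset `A = {x_1, …, x_n}` of `X` (the right-hand side being half of the full
double sum), then the induced metric space `(X, d)` is hyperconvex. -/
theorem inducedHyperconvex_of_hyperconvex_diversity
    {X : Type*} [DecidableEq X] (D : Diversity X)
    (hH : D.Hyperconvex)
    (hcond : ∀ A : Finset X,
      ((A.card : ℝ) - 1) * D.delta A ≤ (∑ a ∈ A, ∑ b ∈ A, D.delta {a, b}) / 2) :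
    D.InducedHyperconvex := by
  classical
  by_cases hX : IsEmpty X
  · intro s _ _
    exfalso
    obtain ⟨z, -⟩ := hH (fun _ => 0) rfl (by
      intro 𝒜
      have h𝒜 : (𝒜.sup id : Finset X) = ∅ := Finset.eq_empty_of_isEmpty _
      simp [h𝒜, aux_delta_empty])
    exact hX.false z
  have hXne : Nonempty X := not_isEmpty_iff.mp hX
  intro s hr hball
  rcases Set.eq_empty_or_nonempty s with hs | ⟨p₀, hp₀⟩
  · simp [hs]
  -- the infimum of radii available at each point
  set ρ : X → ℝ := fun x => sInf {t | (x, t) ∈ s} with hρdef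
  have hρ0 : ∀ x, 0 ≤ ρ x := fun x => Real.sInf_nonneg fun t ht => hr (x, t) ht
  have hbdd : ∀ x, BddBelow {t | (x, t) ∈ s} := fun x => ⟨0, fun t ht => hr (x, t) ht⟩
  have hρ_le : ∀ p ∈ s, ρ p.1 ≤ p.2 := fun p hp => csInf_le (hbdd p.1) hp
  have hρd : ∀ a b : X, (∃ t, (a, t) ∈ s) → (∃ t, (b, t) ∈ s) →
      D.delta {a, b} ≤ ρ a + ρ b := by
    rintro a b ⟨ta, hta⟩ ⟨tb, htb⟩
    have h1 : D.delta {a, b} - ρ b ≤ ρ a := by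
      apply le_csInf ⟨ta, hta⟩
      intro t ht
      have h2 : D.delta {a, b} - t ≤ ρ b := by
        apply le_csInf ⟨tb, htb⟩
        intro u hu
        have := hball (a, t) ht (b, u) hu
        simp only at this
        linarith
      linarith
    linarith
  -- key estimate: δ(A) ≤ ∑ ρ for sets of centers
  have hkey : ∀ A : Finset X, (∀ a ∈ A, ∃ t, (a, t) ∈ s) → D.delta A ≤ ∑ a ∈ A, ρ a := by
    intro A hA
    by_cases hc : A.card ≤ 1
    · rw [(D.eq_zero_iff A).mpr hc]
      exact Finset.sum_nonneg fun a _ => hρ0 a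
    · push_neg at hc
      have hn1 : (0 : ℝ) < (A.card : ℝ) - 1 := by
        have : (1 : ℝ) < (A.card : ℝ) := by exact_mod_cast hc
        linarith
      have hper : ∀ a ∈ A, ∑ b ∈ A, D.delta {a, b}
          ≤ ((A.card : ℝ) - 2) * ρ a + ∑ b ∈ A, ρ b := by
        intro a ha
        have e1 : ∑ b ∈ A.erase a, D.delta {a, b} + D.delta {a, a} = ∑ b ∈ A, D.delta {a, b} :=
          Finset.sum_erase_add A _ ha
        have e2 : D.delta {a, a} = 0 := by
          have hpair : ({a, a} : Finset X) = {a} := by simp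
          rw [hpair]; exact aux_delta_singleton D a
        have e3 : ∑ b ∈ A.erase a, D.delta {a, b} ≤ ∑ b ∈ A.erase a, (ρ a + ρ b) :=
          Finset.sum_le_sum fun b hb => hρd a b (hA a ha) (hA b (Finset.mem_of_mem_erase hb))
        have e4 : ∑ b ∈ A.erase a, (ρ a + ρ b)
            = ((A.erase a).card : ℝ) * ρ a + ∑ b ∈ A.erase a, ρ b := by
          rw [Finset.sum_add_distrib, Finset.sum_const, nsmul_eq_mul]
        have e5 : ((A.erase a).card : ℝ) = (A.card : ℝ) - 1 := by
          rw [Finset.card_erase_of_mem ha]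
          have h1n : 1 ≤ A.card := le_of_lt hc
          push_cast [h1n]
          ring
        have e6 : ∑ b ∈ A.erase a, ρ b + ρ a = ∑ b ∈ A, ρ b := Finset.sum_erase_add A ρ ha
        rw [e5] at e4
        linarith
      have hT : ∑ a ∈ A, ∑ b ∈ A, D.delta {a, b}
          ≤ (2 * (A.card : ℝ) - 2) * ∑ a ∈ A, ρ a := by
        calc ∑ a ∈ A, ∑ b ∈ A, D.delta {a, b}
            ≤ ∑ a ∈ A, (((A.card : ℝ) - 2) * ρ a + ∑ b ∈ A, ρ b) := Finset.sum_le_sum hper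
          _ = ((A.card : ℝ) - 2) * (∑ a ∈ A, ρ a) + (A.card : ℝ) * ∑ b ∈ A, ρ b := by
              rw [Finset.sum_add_distrib, ← Finset.mul_sum, Finset.sum_const, nsmul_eq_mul]
          _ = (2 * (A.card : ℝ) - 2) * ∑ a ∈ A, ρ a := by ring
      have hc2 := hcond A
      have hfin : ((A.card : ℝ) - 1) * D.delta A ≤ ((A.card : ℝ) - 1) * ∑ a ∈ A, ρ a := by
        linarith
      exact le_of_mul_le_mul_left hfin hn1
  -- apply hyperconvexity of the diversity
  have hmain : ∀ 𝒜 : Finset (Finset X), D.delta (𝒜.sup id)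
      ≤ ∑ A ∈ 𝒜, (if ∀ y ∈ A, ∃ t, (y, t) ∈ s then ∑ y ∈ A, ρ y
              else D.delta (insert p₀.1 A) + ρ p₀.1) := by
    intro 𝒜
    by_cases hgood : ∀ A ∈ 𝒜, ∀ y ∈ A, ∃ t, (y, t) ∈ s
    · have h1 : D.delta (𝒜.sup id) ≤ ∑ u ∈ 𝒜.sup id, ρ u := by
        apply hkey
        intro a ha
        obtain ⟨A, hA, haA⟩ := Finset.mem_sup.mp ha
        exact hgood A hA a haA
      have h2 : ∑ u ∈ 𝒜.sup id, ρ u ≤ ∑ A ∈ 𝒜, ∑ u ∈ A, ρ u := aux_sum_sup ρ hρ0 𝒜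
      have h3 : ∑ A ∈ 𝒜, ∑ u ∈ A, ρ u
          = ∑ A ∈ 𝒜, (if ∀ y ∈ A, ∃ t, (y, t) ∈ s then ∑ y ∈ A, ρ y
              else D.delta (insert p₀.1 A) + ρ p₀.1) :=
        Finset.sum_congr rfl fun A hA => (if_pos (hgood A hA)).symm
      calc D.delta (𝒜.sup id) ≤ ∑ u ∈ 𝒜.sup id, ρ u := h1
        _ ≤ ∑ A ∈ 𝒜, ∑ u ∈ A, ρ u := h2
        _ = _ := h3
    · set G := 𝒜.filter (fun A => ∀ y ∈ A, ∃ t, (y, t) ∈ s) with hG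
      set Bd := 𝒜.filter (fun A => ¬ ∀ y ∈ A, ∃ t, (y, t) ∈ s) with hBd
      have hBdne : Bd.Nonempty := by
        push_neg at hgood
        obtain ⟨A, hA, hbad⟩ := hgood
        refine ⟨A, Finset.mem_filter.mpr ⟨hA, ?_⟩⟩
        push_neg
        exact hbad
      have hsplit : G ∪ Bd = 𝒜 := Finset.filter_union_filter_not_eq _ 𝒜
      have hsup : 𝒜.sup id = G.sup id ∪ Bd.sup id := by
        conv_lhs => rw [← hsplit]
        rw [Finset.sup_union]
        rfl
      have t1 : D.delta (𝒜.sup id)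
          ≤ D.delta (G.sup id ∪ {p₀.1}) + D.delta ({p₀.1} ∪ Bd.sup id) := by
        rw [hsup]
        exact D.triangle _ _ _ ⟨p₀.1, Finset.mem_singleton_self _⟩
      have e1 : G.sup id ∪ {p₀.1} = insert p₀.1 (G.sup id) := by
        ext y; simp only [Finset.mem_union, Finset.mem_insert, Finset.mem_singleton]; tauto
      have e2 : ({p₀.1} : Finset X) ∪ Bd.sup id = insert p₀.1 (Bd.sup id) := by
        rw [← Finset.insert_eq]
      rw [e1, e2] at t1
      have t2 : D.delta (insert p₀.1 (G.sup id)) ≤ ρ p₀.1 + ∑ A ∈ G, ∑ u ∈ A, ρ u := by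
        have hcen : ∀ a ∈ insert p₀.1 (G.sup id), ∃ t, (a, t) ∈ s := by
          intro a ha
          rcases Finset.mem_insert.mp ha with rfl | h
          · exact ⟨p₀.2, hp₀⟩
          · obtain ⟨A, hA, haA⟩ := Finset.mem_sup.mp h
            exact (Finset.mem_filter.mp hA).2 a haA
        calc D.delta (insert p₀.1 (G.sup id)) ≤ ∑ u ∈ insert p₀.1 (G.sup id), ρ u :=
              hkey _ hcen
          _ ≤ ρ p₀.1 + ∑ u ∈ G.sup id, ρ u := aux_sum_insert_le ρ hρ0 _ _
          _ ≤ ρ p₀.1 + ∑ A ∈ G, ∑ u ∈ A, ρ u := by linarith [aux_sum_sup ρ hρ0 G]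
      have t3 : D.delta (insert p₀.1 (Bd.sup id)) ≤ ∑ A ∈ Bd, D.delta (insert p₀.1 A) :=
        aux_insert_sup D p₀.1 Bd
      have rG : ∑ A ∈ G, (if ∀ y ∈ A, ∃ t, (y, t) ∈ s then ∑ y ∈ A, ρ y
              else D.delta (insert p₀.1 A) + ρ p₀.1) = ∑ A ∈ G, ∑ u ∈ A, ρ u :=
        Finset.sum_congr rfl fun A hA => if_pos ((Finset.mem_filter.mp hA).2)
      have rB : ∑ A ∈ Bd, (if ∀ y ∈ A, ∃ t, (y, t) ∈ s then ∑ y ∈ A, ρ y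
              else D.delta (insert p₀.1 A) + ρ p₀.1)
          = ∑ A ∈ Bd, D.delta (insert p₀.1 A) + (Bd.card : ℝ) * ρ p₀.1 := by
        rw [Finset.sum_congr rfl fun A hA => if_neg ((Finset.mem_filter.mp hA).2)]
        rw [Finset.sum_add_distrib, Finset.sum_const, nsmul_eq_mul]
      have hcard : (1 : ℝ) ≤ (Bd.card : ℝ) := by
        exact_mod_cast Finset.card_pos.mpr hBdne
      have hsum𝒜 : ∑ A ∈ 𝒜, (if ∀ y ∈ A, ∃ t, (y, t) ∈ s then ∑ y ∈ A, ρ y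
              else D.delta (insert p₀.1 A) + ρ p₀.1)
          = ∑ A ∈ G, (if ∀ y ∈ A, ∃ t, (y, t) ∈ s then ∑ y ∈ A, ρ y
              else D.delta (insert p₀.1 A) + ρ p₀.1)
            + ∑ A ∈ Bd, (if ∀ y ∈ A, ∃ t, (y, t) ∈ s then ∑ y ∈ A, ρ y
              else D.delta (insert p₀.1 A) + ρ p₀.1) :=
        (Finset.sum_filter_add_sum_filter_not 𝒜 _ _).symm
      rw [hsum𝒜, rG, rB]
      have hρp : 0 ≤ ρ p₀.1 := hρ0 _
      nlinarith [hρp, hcard]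

  obtain ⟨z, hz⟩ := hH
    (fun Y => if ∀ y ∈ Y, ∃ t, (y, t) ∈ s then ∑ y ∈ Y, ρ y
              else D.delta (insert p₀.1 Y) + ρ p₀.1) (by simp) hmain
  · refine ⟨z, ?_⟩
    simp only [Set.mem_iInter]
    intro p hp
    have hY : ∀ y ∈ ({p.1} : Finset X), ∃ t, (y, t) ∈ s := by
      intro y hy
      rw [Finset.mem_singleton] at hy
      subst hy
      exact ⟨p.2, hp⟩
    have h1 := hz {p.1}
    rw [if_pos hY, Finset.sum_singleton] at h1
    have h2 : insert z ({p.1} : Finset X) = {p.1, z} := by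
      ext y; simp only [Finset.mem_insert, Finset.mem_singleton]; tauto
    rw [h2] at h1
    exact le_trans h1 (hρ_le p hp)
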